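/- If Ψ has unit-norm columns with mutual coherence μ(Ψ), and c* satisfies Ψc* = u with ‖c*‖₀ < (1 + 1/μ(Ψ))/2, then c* is the unique solution of the ℓ₀ minimization problem min ‖c‖₀ subject to Ψc = u. -/

import Mathlib

open Finset

noncomputable def coherence {M K : ℕ} (Ψ : Matrix (Fin M) (Fin K) ℝ) : ℝ :=
  sSup {x : ℝ | ∃ i j : Fin K, i ≠ j ∧
    x = |∑ m, Ψ m i * Ψ m j| /
      (Real.sqrt (∑ m, (Ψ m i)^2) * Real.sqrt (∑ m, (Ψ m j)^2))}

noncomputable def l0 {K : ℕ} (c : Fin K → ℝ) : ℕ := (Finset.univ.filter fun j => c j ≠ 0).card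

noncomputable def l1 {K : ℕ} (c : Fin K → ℝ) : ℝ := ∑ j, |c j|

noncomputable def l2 {n : ℕ} (c : Fin n → ℝ) : ℝ := Real.sqrt (∑ j, (c j)^2)

noncomputable def ripConst {M K : ℕ} (Ψ : Matrix (Fin M) (Fin K) ℝ) (S : ℕ) : ℝ :=
  sInf {δ : ℝ | 0 ≤ δ ∧ ∀ c : Fin K → ℝ, l0 c ≤ S →
    (1 - δ) * (l2 c)^2 ≤ (l2 (Ψ.mulVec c))^2 ∧
    (l2 (Ψ.mulVec c))^2 ≤ (1 + δ) * (l2 c)^2}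

lemma gram_le_coherence {M K : ℕ} (Ψ : Matrix (Fin M) (Fin K) ℝ)
    (hcol : ∀ j : Fin K, ∑ m, (Ψ m j)^2 = 1) {i j : Fin K} (hij : i ≠ j) :
    |∑ m, Ψ m i * Ψ m j| ≤ coherence Ψ := by
  have hmem : |∑ m, Ψ m i * Ψ m j| ∈ {x : ℝ | ∃ i j : Fin K, i ≠ j ∧
      x = |∑ m, Ψ m i * Ψ m j| /
        (Real.sqrt (∑ m, (Ψ m i)^2) * Real.sqrt (∑ m, (Ψ m j)^2))} := by
    exact ⟨i, j, hij, by simp [hcol]⟩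
  refine le_csSup ?_ hmem
  refine ⟨1, ?_⟩
  rintro x ⟨a, b, hab, rfl⟩
  simp only [hcol, Real.sqrt_one, mul_one, div_one]
  rw [abs_le]
  have hCS := Finset.sum_mul_sq_le_sq_mul_sq Finset.univ (fun m => Ψ m a) (fun m => Ψ m b)
  rw [hcol, hcol, mul_one] at hCS
  constructor
  · nlinarith [hCS]
  · nlinarith [hCS]

theorem l0_unique_recovery {M K : ℕ} (Ψ : Matrix (Fin M) (Fin K) ℝ)
    (hcol : ∀ j : Fin K, ∑ m, (Ψ m j)^2 = 1)
    (u : Fin M → ℝ) (cstar : Fin K → ℝ)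
    (hsol : Ψ.mulVec cstar = u)
    (hsparse : (l0 cstar : ℝ) < (1 + 1 / coherence Ψ) / 2) :
    ∀ c : Fin K → ℝ, Ψ.mulVec c = u → c ≠ cstar → l0 cstar < l0 c := by
  intro c hc hne
  set μ := coherence Ψ with hμdef
  set h : Fin K → ℝ := c - cstar with hh
  have hΨh : Ψ.mulVec h = 0 := by
    rw [hh, Matrix.mulVec_sub, hc, hsol, sub_self]
  have hh0 : h ≠ 0 := sub_ne_zero.mpr hne
  by_cases hμpos : 0 < μ
  · -- main case: spark bound
    set S : Finset (Fin K) := Finset.univ.filter (fun j => h j ≠ 0) with hS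
    have hsupp : ∀ j, j ∉ S → h j = 0 := by
      intro j hj; by_contra hjz
      exact hj (Finset.mem_filter.mpr ⟨Finset.mem_univ j, hjz⟩)
    set T : ℝ := ∑ i, (h i)^2 with hT
    have hTpos : 0 < T := by
      obtain ⟨i, hi⟩ := Function.ne_iff.mp hh0
      have : (0:ℝ) < (h i)^2 := sq_pos_of_ne_zero hi
      exact lt_of_lt_of_le this (Finset.single_le_sum (f := fun i => (h i)^2)
        (fun i _ => sq_nonneg _) (Finset.mem_univ i))
    -- expand 0 = ∑ i ∑ j h i h j G i j
    have hexpand : ∑ i, ∑ j, h i * h j * (∑ m, Ψ m i * Ψ m j) = 0 := by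
      have : ∑ m, (Ψ.mulVec h m)^2 = 0 := by rw [hΨh]; simp
      rw [← this]
      have e : ∀ i j : Fin K, h i * h j * (∑ m, Ψ m i * Ψ m j)
          = ∑ m, (Ψ m i * h i) * (Ψ m j * h j) := by
        intro i j
        rw [Finset.mul_sum]
        exact Finset.sum_congr rfl fun m _ => by ring
      simp only [Matrix.mulVec, dotProduct, sq, Finset.sum_mul_sum, e]
      calc ∑ i : Fin K, ∑ j : Fin K, ∑ m : Fin M, (Ψ m i * h i) * (Ψ m j * h j)
          = ∑ i : Fin K, ∑ m : Fin M, ∑ j : Fin K, (Ψ m i * h i) * (Ψ m j * h j) :=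
            Finset.sum_congr rfl fun i _ => Finset.sum_comm
        _ = ∑ m : Fin M, ∑ i : Fin K, ∑ j : Fin K, (Ψ m i * h i) * (Ψ m j * h j) :=
            Finset.sum_comm
    -- split diagonal
    have hsplit : T + ∑ i, ∑ j ∈ Finset.univ.erase i, h i * h j * (∑ m, Ψ m i * Ψ m j) = 0 := by
      rw [← hexpand, hT]
      rw [← Finset.sum_add_distrib]
      refine Finset.sum_congr rfl fun i _ => ?_
      rw [← Finset.add_sum_erase _ _ (Finset.mem_univ i)]
      congr 1
      have : ∑ m, Ψ m i * Ψ m i = 1 := by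
        rw [← hcol i]; exact Finset.sum_congr rfl fun m _ => (sq (Ψ m i)).symm
      rw [this]; ring
    -- bound off-diagonal
    have hoff : T ≤ μ * ((∑ i, |h i|)^2 - T) := by
      have h1 : T = -∑ i, ∑ j ∈ Finset.univ.erase i, h i * h j * (∑ m, Ψ m i * Ψ m j) := by
        linarith
      have h2 : -∑ i, ∑ j ∈ Finset.univ.erase i, h i * h j * (∑ m, Ψ m i * Ψ m j)
          ≤ ∑ i, ∑ j ∈ Finset.univ.erase i, |h i| * |h j| * μ := by
        rw [← Finset.sum_neg_distrib]
        refine Finset.sum_le_sum fun i _ => ?_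
        rw [← Finset.sum_neg_distrib]
        refine Finset.sum_le_sum fun j hj => ?_
        have hij : i ≠ j := fun e => (Finset.mem_erase.mp hj).1 e.symm
        have hb := gram_le_coherence Ψ hcol hij
        have habs : |h i * h j * (∑ m, Ψ m i * Ψ m j)| ≤ |h i| * |h j| * μ := by
          rw [abs_mul, abs_mul]
          exact mul_le_mul_of_nonneg_left hb (by positivity)
        calc -(h i * h j * (∑ m, Ψ m i * Ψ m j)) ≤ |h i * h j * (∑ m, Ψ m i * Ψ m j)| :=
              neg_le_abs _
          _ ≤ |h i| * |h j| * μ := habs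
      have h3 : ∑ i, ∑ j ∈ Finset.univ.erase i, |h i| * |h j| * μ
          = μ * ((∑ i, |h i|)^2 - T) := by
        have : ∑ i, ∑ j ∈ Finset.univ.erase i, |h i| * |h j|
            = (∑ i, |h i|)^2 - T := by
          have e1 : (∑ i, |h i|)^2 = ∑ i, ∑ j, |h i| * |h j| := by
            rw [sq, Finset.sum_mul_sum]
          rw [e1, hT]
          rw [← Finset.sum_sub_distrib]
          refine Finset.sum_congr rfl fun i _ => ?_
          have e3 := Finset.add_sum_erase Finset.univ (fun j => |h i| * |h j|)
            (Finset.mem_univ i)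
          have e4 : |h i| * |h i| = (h i)^2 := by rw [← abs_mul, ← sq, abs_sq]
          linarith
        rw [← this, Finset.mul_sum]
        refine Finset.sum_congr rfl fun i _ => ?_
        rw [Finset.mul_sum]
        refine Finset.sum_congr rfl fun j _ => by ring
      calc T = -∑ i, ∑ j ∈ Finset.univ.erase i, h i * h j * (∑ m, Ψ m i * Ψ m j) := h1
        _ ≤ ∑ i, ∑ j ∈ Finset.univ.erase i, |h i| * |h j| * μ := h2
        _ = μ * ((∑ i, |h i|)^2 - T) := h3
    -- Cauchy-Schwarz on support
    have hCS : (∑ i, |h i|)^2 ≤ (S.card : ℝ) * T := by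
      have e1 : ∑ i, |h i| = ∑ i ∈ S, |h i| := by
        refine (Finset.sum_subset (Finset.subset_univ S) ?_).symm
        intro x _ hx
        rw [hsupp x hx, abs_zero]
      have e2 : T = ∑ i ∈ S, (h i)^2 := by
        refine (Finset.sum_subset (Finset.subset_univ S) ?_).symm
        intro x _ hx
        rw [hsupp x hx]; ring
      rw [e1, e2]
      have := sq_sum_le_card_mul_sum_sq (s := S) (f := fun i => |h i|)
      simp only [sq_abs] at this
      exact_mod_cast this
    -- conclude 1 ≤ μ (S.card - 1)
    have hspark : (1:ℝ) ≤ μ * ((S.card : ℝ) - 1) := by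
      have : T ≤ μ * ((S.card : ℝ) * T - T) := by
        refine le_trans hoff ?_
        have : (∑ i, |h i|)^2 - T ≤ (S.card : ℝ) * T - T := by linarith
        exact mul_le_mul_of_nonneg_left this (le_of_lt hμpos)
      nlinarith
    have hcard : (1:ℝ) + 1/μ ≤ (S.card : ℝ) := by
      have : 1/μ ≤ (S.card : ℝ) - 1 := by
        rw [div_le_iff₀ hμpos]
        nlinarith [hspark]
      linarith
    -- l0 h ≤ l0 c + l0 cstar
    have hsum : (S.card : ℝ) ≤ (l0 c : ℝ) + (l0 cstar : ℝ) := by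
      have hsub : S ⊆ (Finset.univ.filter fun j => c j ≠ 0) ∪
          (Finset.univ.filter fun j => cstar j ≠ 0) := by
        intro x hx
        have hx' := (Finset.mem_filter.mp hx).2
        rw [Finset.mem_union, Finset.mem_filter, Finset.mem_filter]
        by_contra hcon
        push_neg at hcon
        have h1 := hcon.1 (Finset.mem_univ x)
        have h2 := hcon.2 (Finset.mem_univ x)
        apply hx'
        simp [hh, h1, h2]
      have := le_trans (Finset.card_le_card hsub) (Finset.card_union_le _ _)
      unfold l0
      exact_mod_cast this
    have : (l0 cstar : ℝ) < (l0 c : ℝ) := by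
      have h1 : (1:ℝ) + 1/μ ≤ (l0 c : ℝ) + (l0 cstar : ℝ) := le_trans hcard hsum
      linarith
    exact_mod_cast this
  · -- μ ≤ 0: hypothesis forces l0 cstar = 0
    push_neg at hμpos
    have h1μ : 1/μ ≤ 0 := by
      rcases eq_or_lt_of_le hμpos with heq | hlt
      · rw [heq]; norm_num
      · exact le_of_lt (div_neg_of_pos_of_neg one_pos hlt)
    have : (l0 cstar : ℝ) < 1/2 := by linarith
    have h0 : l0 cstar = 0 := by
      by_contra hz
      have : (1:ℝ) ≤ (l0 cstar : ℝ) := by exact_mod_cast Nat.one_le_iff_ne_zero.mpr hz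
      linarith
    rw [h0]
    have hcne : c ≠ 0 := by
      intro hc0
      apply hne
      have hcz : ∀ j, cstar j = 0 := by
        intro j
        by_contra hj
        have hmem : j ∈ Finset.univ.filter fun j => cstar j ≠ 0 :=
          Finset.mem_filter.mpr ⟨Finset.mem_univ j, hj⟩
        have hpos : 0 < l0 cstar := by
          unfold l0
          exact Finset.card_pos.mpr ⟨j, hmem⟩
        omega
      funext j
      rw [hc0]
      simp [hcz j]
    obtain ⟨j, hj⟩ := Function.ne_iff.mp hcne
    have hmem : j ∈ Finset.univ.filter fun j => c j ≠ 0 :=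
      Finset.mem_filter.mpr ⟨Finset.mem_univ j, by simpa using hj⟩
    unfold l0
    exact Finset.card_pos.mpr ⟨j, hmem⟩
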